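/- In the Artin group A(6,3,2) = ⟨s, t, r | ststst = tststs, trt = rtr, sr = rs⟩, for every k ≥ 1 and all nonzero integers n_1, …, n_k, the element ststsrtstr commutes with the element (t^{n_1} s t s t r)(t^{n_2} s t s t r) ⋯ (t^{n_k} s t s t r). In particular, for each such product w, the subgroup ⟨ststsrtstr, w⟩ of A(6,3,2) is abelian. -/

import Mathlib

namespace A632

/-- The defining relations of the Artin group
`A(6,3,2) = ⟨s, t, r | ststst = tststs, trt = rtr, sr = rs⟩`,
with `0, 1, 2` playing the roles of `s, t, r`. -/
def rels : Set (FreeGroup (Fin 3)) :=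
  { FreeGroup.of 0 * FreeGroup.of 1 * FreeGroup.of 0 * FreeGroup.of 1 *
      FreeGroup.of 0 * FreeGroup.of 1 *
      (FreeGroup.of 1 * FreeGroup.of 0 * FreeGroup.of 1 * FreeGroup.of 0 *
        FreeGroup.of 1 * FreeGroup.of 0)⁻¹,
    FreeGroup.of 1 * FreeGroup.of 2 * FreeGroup.of 1 *
      (FreeGroup.of 2 * FreeGroup.of 1 * FreeGroup.of 2)⁻¹,
    FreeGroup.of 0 * FreeGroup.of 2 * (FreeGroup.of 2 * FreeGroup.of 0)⁻¹ }

/-- The Artin group `A(6,3,2)`. -/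
abbrev Grp := PresentedGroup rels

def s : Grp := PresentedGroup.of 0
def t : Grp := PresentedGroup.of 1
def r : Grp := PresentedGroup.of 2

lemma rel_eq_one {x : FreeGroup (Fin 3)} (hx : x ∈ rels) :
    (PresentedGroup.mk rels) x = 1 :=
  (QuotientGroup.eq_one_iff _).mpr (Subgroup.subset_normalClosure hx)

lemma h1 : s * t * s * t * s * t = t * s * t * s * t * s := by
  have h := rel_eq_one (x :=
    FreeGroup.of 0 * FreeGroup.of 1 * FreeGroup.of 0 * FreeGroup.of 1 *
      FreeGroup.of 0 * FreeGroup.of 1 *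
      (FreeGroup.of 1 * FreeGroup.of 0 * FreeGroup.of 1 * FreeGroup.of 0 *
        FreeGroup.of 1 * FreeGroup.of 0)⁻¹) (by left; rfl)
  simp only [map_mul, map_inv] at h
  have h' : (s * t * s * t * s * t) * (t * s * t * s * t * s)⁻¹ = 1 := h
  rw [mul_inv_eq_iff_eq_mul, one_mul] at h'
  exact h'

lemma h2 : t * r * t = r * t * r := by
  have h := rel_eq_one (x :=
    FreeGroup.of 1 * FreeGroup.of 2 * FreeGroup.of 1 *
      (FreeGroup.of 2 * FreeGroup.of 1 * FreeGroup.of 2)⁻¹) (by right; left; rfl)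
  simp only [map_mul, map_inv] at h
  have h' : (t * r * t) * (r * t * r)⁻¹ = 1 := h
  rw [mul_inv_eq_iff_eq_mul, one_mul] at h'
  exact h'

lemma h3 : s * r = r * s := by
  have h := rel_eq_one (x :=
    FreeGroup.of 0 * FreeGroup.of 2 * (FreeGroup.of 2 * FreeGroup.of 0)⁻¹)
    (by right; right; rfl)
  simp only [map_mul, map_inv] at h
  have h' : (s * r) * (r * s)⁻¹ = 1 := h
  rw [mul_inv_eq_iff_eq_mul, one_mul] at h'
  exact h'

lemma c1 : r * t * r⁻¹ = t⁻¹ * r * t := by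
  have h : r * t * r⁻¹ = t⁻¹ * (t * r * t) * r⁻¹ := by group
  rw [h2] at h
  rw [h]; group

lemma c2 : t * r * t⁻¹ = r⁻¹ * t * r := by
  have h : t * r * t⁻¹ = r⁻¹ * (r * t * r) * t⁻¹ := by group
  rw [← h2] at h
  rw [h]; group

lemma c3 : s⁻¹ * r⁻¹ = r⁻¹ * s⁻¹ := by
  have h : s⁻¹ * r⁻¹ = (r * s)⁻¹ := by group
  rw [← h3] at h
  rw [h]; group

/-- The element `y = ststr`. -/
noncomputable def y : Grp := s * t * s * t * r

lemma E1 : y * t * y⁻¹ = s * t * r * t⁻¹ * s⁻¹ := by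
  calc y * t * y⁻¹
      = s * t * s * t * (r * t * r⁻¹) * (t⁻¹ * s⁻¹ * t⁻¹ * s⁻¹) := by rw [y]; group
    _ = s * t * s * t * (t⁻¹ * r * t) * (t⁻¹ * s⁻¹ * t⁻¹ * s⁻¹) := by rw [c1]
    _ = s * t * (s * r) * (s⁻¹ * t⁻¹ * s⁻¹) := by group
    _ = s * t * (r * s) * (s⁻¹ * t⁻¹ * s⁻¹) := by rw [h3]
    _ = s * t * r * t⁻¹ * s⁻¹ := by group

lemma E2 : y * (s * t * r * t⁻¹ * s⁻¹) * y⁻¹ = t := by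
  calc y * (s * t * r * t⁻¹ * s⁻¹) * y⁻¹
      = s * t * s * t * (r * s) * (t * r * t⁻¹) * (s⁻¹ * r⁻¹) *
          (t⁻¹ * s⁻¹ * t⁻¹ * s⁻¹) := by rw [y]; group
    _ = s * t * s * t * (s * r) * (t * r * t⁻¹) * (s⁻¹ * r⁻¹) *
          (t⁻¹ * s⁻¹ * t⁻¹ * s⁻¹) := by rw [← h3]
    _ = s * t * s * t * (s * r) * (r⁻¹ * t * r) * (s⁻¹ * r⁻¹) *
          (t⁻¹ * s⁻¹ * t⁻¹ * s⁻¹) := by rw [c2]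
    _ = s * t * s * t * (s * r) * (r⁻¹ * t * r) * (r⁻¹ * s⁻¹) *
          (t⁻¹ * s⁻¹ * t⁻¹ * s⁻¹) := by rw [c3]
    _ = (s * t * s * t * s * t) * (s⁻¹ * t⁻¹ * s⁻¹ * t⁻¹ * s⁻¹) := by group
    _ = (t * s * t * s * t * s) * (s⁻¹ * t⁻¹ * s⁻¹ * t⁻¹ * s⁻¹) := by rw [h1]
    _ = t := by group

lemma yy_comm_t : Commute (y * y) t := by
  have h : (y * y) * t * (y * y)⁻¹ = y * (y * t * y⁻¹) * y⁻¹ := by group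
  rw [E1, E2] at h
  exact mul_inv_eq_iff_eq_mul.mp h

lemma x_eq : s * t * s * t * s * r * t * s * t * r = y * y := by
  calc s * t * s * t * s * r * t * s * t * r
      = s * t * s * t * (s * r) * (t * s * t * r) := by group
    _ = s * t * s * t * (r * s) * (t * s * t * r) := by rw [h3]
    _ = y * y := by rw [y]; group

end A632

open A632 in
/-- In `A(6,3,2)`, the element `ststsrtstr` commutes with every product
`(t^{n₁}ststr)⋯(t^{n_k}ststr)` with all `nᵢ` nonzero; in particular the subgroup
generated by `ststsrtstr` and such a product is abelian. -/
theorem A632_ststsrtstr_commutes (k : ℕ) (hk : 1 ≤ k) (n : Fin k → ℤ) (hn : ∀ p, n p ≠ 0) :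
    Commute (s * t * s * t * s * r * t * s * t * r)
      (((List.finRange k).map fun p => t ^ n p * s * t * s * t * r).prod) ∧
    IsMulCommutative (Subgroup.closure {s * t * s * t * s * r * t * s * t * r,
      ((List.finRange k).map fun p => t ^ n p * s * t * s * t * r).prod}) := by
  set x : A632.Grp := s * t * s * t * s * r * t * s * t * r with hx
  have hxt : Commute x t := by rw [hx, x_eq]; exact yy_comm_t
  have hxy : Commute x y := by rw [hx, x_eq]; exact (Commute.refl y).mul_left (Commute.refl y)
  have hfac : ∀ p : Fin k, Commute x (t ^ n p * s * t * s * t * r) := by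
    intro p
    have : t ^ n p * s * t * s * t * r = t ^ n p * y := by rw [y]; group
    rw [this]
    exact (hxt.zpow_right (n p)).mul_right hxy
  have hcomm : Commute x (((List.finRange k).map fun p => t ^ n p * s * t * s * t * r).prod) := by
    apply Commute.list_prod_right
    intro z hz
    simp only [List.mem_map] at hz
    obtain ⟨p, -, rfl⟩ := hz
    exact hfac p
  refine ⟨hcomm, ?_⟩
  set w := ((List.finRange k).map fun p => t ^ n p * s * t * s * t * r).prod with hw
  have hpair : ∀ a ∈ ({x, w} : Set A632.Grp), ∀ b ∈ ({x, w} : Set A632.Grp), Commute a b := by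
    rintro a (rfl | rfl) b (rfl | rfl)
    · exact Commute.refl _
    · exact hcomm
    · exact hcomm.symm
    · exact Commute.refl _
  have hall : ∀ a ∈ Subgroup.closure ({x, w} : Set A632.Grp),
      ∀ b ∈ Subgroup.closure ({x, w} : Set A632.Grp), Commute a b := by
    intro a ha b hb
    induction ha, hb using Subgroup.closure_induction₂ with
    | mem u v hu hv => exact hpair u hu v hv
    | one_left v hv => exact Commute.one_left v
    | one_right u hu => exact Commute.one_right u
    | mul_left u v z hu hv hz h₁ h₂ => exact h₁.mul_left h₂
    | mul_right u v z hu hv hz h₁ h₂ => exact h₁.mul_right h₂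
    | inv_left u v hu hv h => exact h.inv_left
    | inv_right u v hu hv h => exact h.inv_right
  exact ⟨⟨fun a b => Subtype.ext (hall a a.2 b b.2)⟩⟩
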